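/- Let d, k be positive integers and let c_1, ..., c_k, D be vectors in ℕ^d (componentwise positive) such that the componentwise product c_1 ⋯ c_k is componentwise divisible by D and D is componentwise divisible by each c_i. Then the number of vectors x with 1 ≤ x_j ≤ D_j for all j, such that for each i there is some component j with c_{i,j} not dividing x_j, is at least (D_1 ⋯ D_d) · ∏_{i=1}^k (1 − 1/(c_{i,1} ⋯ c_{i,d})). -/

import Mathlib

open Finset
open scoped FinsetFamily

namespace MSieve

noncomputable instance : DistribLattice (ℕ →₀ ℕ) :=
  { (inferInstance : Lattice (ℕ →₀ ℕ)) with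
    le_sup_inf := by
      intro a b c
      rw [Finsupp.le_def]
      intro i
      have h1 : ((a ⊔ b) ⊓ (a ⊔ c)) i = (a i ⊔ b i) ⊓ (a i ⊔ c i) := by
        simp [Finsupp.inf_apply, Finsupp.sup_apply]
      have h2 : (a ⊔ b ⊓ c) i = a i ⊔ (b i ⊓ c i) := by
        simp [Finsupp.inf_apply, Finsupp.sup_apply]
      rw [h1, h2]
      exact le_sup_inf }

lemma totient_inf_sup (a b : ℕ) (ha : 0 < a) (hb : 0 < b) :
    Nat.totient (Nat.gcd a b) * Nat.totient (Nat.lcm a b) =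
      Nat.totient a * Nat.totient b := by
  have h1 := Nat.totient_gcd_mul_totient_mul a b
  have h2 := Nat.totient_gcd_mul_totient_mul (Nat.gcd a b) (Nat.lcm a b)
  have h3 : Nat.gcd (Nat.gcd a b) (Nat.lcm a b) = Nat.gcd a b :=
    Nat.gcd_eq_left ((Nat.gcd_dvd_left a b).trans (Nat.dvd_lcm_left a b))
  rw [h3, Nat.gcd_mul_lcm] at h2
  have hg : 0 < Nat.gcd a b := Nat.gcd_pos_of_pos_left _ ha
  have := h2.symm.trans h1
  exact Nat.eq_of_mul_eq_mul_right hg this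

lemma totient_eq_card_Icc (m : ℕ) (hm : 0 < m) :
    Nat.totient m = #((Icc 1 m).filter fun y => Nat.gcd y m = 1) := by
  rcases eq_or_lt_of_le (show 1 ≤ m from hm) with h1 | h2
  · simp [← h1]
  · rw [Nat.totient_eq_card_coprime]
    congr 1
    ext y
    simp only [mem_filter, mem_range, mem_Icc, Nat.Coprime]
    constructor
    · rintro ⟨hy, hco⟩
      rw [Nat.gcd_comm] at hco
      refine ⟨⟨?_, hy.le⟩, hco⟩
      rcases Nat.eq_zero_or_pos y with rfl | h
      · simp [Nat.gcd_zero_left] at hco; omega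
      · exact h
    · rintro ⟨⟨h1', hy⟩, hco⟩
      refine ⟨?_, by rwa [Nat.gcd_comm]⟩
      rcases eq_or_lt_of_le hy with rfl | h
      · simp [Nat.gcd_self] at hco; omega
      · exact h

lemma card_gcd_fiber {D e : ℕ} (hD : 0 < D) (he : e ∣ D) :
    #((Icc 1 D).filter fun x => Nat.gcd x D = e) = Nat.totient (D / e) := by
  obtain ⟨m, rfl⟩ := he
  have he0 : 0 < e := by
    rcases Nat.eq_zero_or_pos e with rfl | h
    · simp at hD
    · exact h
  have hm0 : 0 < m := by
    rcases Nat.eq_zero_or_pos m with rfl | h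
    · simp at hD
    · exact h
  rw [Nat.mul_div_cancel_left _ he0, totient_eq_card_Icc m hm0]
  apply Finset.card_bij' (fun x _ => x / e) (fun y _ => e * y)
  · intro x hx
    simp only [mem_filter, mem_Icc] at hx ⊢
    obtain ⟨⟨hx1, hx2⟩, hg⟩ := hx
    have hex : e ∣ x := hg ▸ Nat.gcd_dvd_left x (e * m)
    obtain ⟨y, rfl⟩ := hex
    rw [Nat.mul_div_cancel_left _ he0]
    have hy1 : 1 ≤ y := by
      rcases Nat.eq_zero_or_pos y with rfl | h
      · omega
      · exact h
    have hy2 : y ≤ m := Nat.le_of_mul_le_mul_left hx2 he0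
    refine ⟨⟨hy1, hy2⟩, ?_⟩
    have : Nat.gcd (e * y) (e * m) = e * Nat.gcd y m := Nat.gcd_mul_left e y m
    rw [this] at hg
    have := Nat.eq_of_mul_eq_mul_left he0 (by omega : e * Nat.gcd y m = e * 1)
    simpa using this
  · intro y hy
    simp only [mem_filter, mem_Icc] at hy ⊢
    obtain ⟨⟨hy1, hy2⟩, hg⟩ := hy
    refine ⟨⟨by nlinarith, Nat.mul_le_mul_left e hy2⟩, ?_⟩
    rw [Nat.gcd_mul_left, hg, mul_one]
  · intro x hx
    simp only [mem_filter, mem_Icc] at hx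
    obtain ⟨⟨hx1, hx2⟩, hg⟩ := hx
    have hex : e ∣ x := hg ▸ Nat.gcd_dvd_left x (e * m)
    exact Nat.mul_div_cancel' hex
  · intro y hy
    exact Nat.mul_div_cancel_left _ he0

lemma gcd_div_eq {D e f : ℕ} (hD : 0 < D) (he : e ∣ D) (hf : f ∣ D) :
    Nat.gcd (D / e) (D / f) = D / Nat.lcm e f ∧
    Nat.lcm (D / e) (D / f) = D / Nat.gcd e f := by
  have he0 : 0 < e := Nat.pos_of_dvd_of_pos he hD
  have hf0 : 0 < f := Nat.pos_of_dvd_of_pos hf hD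
  have hl : Nat.lcm e f ∣ D := Nat.lcm_dvd he hf
  have hg : Nat.gcd e f ∣ D := (Nat.gcd_dvd_left e f).trans he
  have hDe : 0 < D / e := Nat.div_pos (Nat.le_of_dvd hD he) he0
  have hDf : 0 < D / f := Nat.div_pos (Nat.le_of_dvd hD hf) hf0
  have hDl : 0 < D / Nat.lcm e f :=
    Nat.div_pos (Nat.le_of_dvd hD hl) (Nat.pos_of_dvd_of_pos hl hD)
  have hDg : 0 < D / Nat.gcd e f :=
    Nat.div_pos (Nat.le_of_dvd hD hg) (Nat.pos_of_dvd_of_pos hg hD)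
  have key : ∀ p : ℕ, (e.factorization p ≤ D.factorization p) ∧
      (f.factorization p ≤ D.factorization p) := by
    intro p
    constructor
    · exact (Nat.factorization_le_iff_dvd he0.ne' hD.ne').2 he p
    · exact (Nat.factorization_le_iff_dvd hf0.ne' hD.ne').2 hf p
  constructor
  · apply Nat.factorization_inj (by
      exact (Nat.gcd_pos_of_pos_left _ hDe).ne' :
        Nat.gcd (D/e) (D/f) ∈ {x : ℕ | x ≠ 0}) hDl.ne'
    rw [Nat.factorization_gcd hDe.ne' hDf.ne', Nat.factorization_div he,
      Nat.factorization_div hf, Nat.factorization_div hl,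
      Nat.factorization_lcm he0.ne' hf0.ne']
    ext p
    have := key p
    simp only [Finsupp.inf_apply, Finsupp.sup_apply, Finsupp.tsub_apply]
    omega
  · apply Nat.factorization_inj (Nat.lcm_ne_zero hDe.ne' hDf.ne') hDg.ne'
    rw [Nat.factorization_lcm hDe.ne' hDf.ne', Nat.factorization_div he,
      Nat.factorization_div hf, Nat.factorization_div hg,
      Nat.factorization_gcd he0.ne' hf0.ne']
    ext p
    have := key p
    simp only [Finsupp.inf_apply, Finsupp.sup_apply, Finsupp.tsub_apply]
    omega

/-- number of `x ∈ [1,D]` whose gcd with `D` has factorization `u` -/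
def nD (D : ℕ) (u : ℕ →₀ ℕ) : ℕ :=
  #((Icc 1 D).filter fun x => (Nat.gcd x D).factorization = u)

lemma nD_factorization_eq {D e : ℕ} (hD : 0 < D) (he : e ∣ D) :
    nD D e.factorization = Nat.totient (D / e) := by
  have he0 : 0 < e := Nat.pos_of_dvd_of_pos he hD
  rw [nD, ← card_gcd_fiber hD he]
  congr 1
  apply filter_congr
  intro x hx
  simp only [mem_Icc] at hx
  have hg0 : Nat.gcd x D ≠ 0 := (Nat.gcd_pos_of_pos_right x hD).ne'
  constructor
  · intro h
    exact Nat.factorization_inj hg0 he0.ne' h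
  · intro h
    simp [h]

lemma nD_supermul {D : ℕ} (hD : 0 < D) (u v : ℕ →₀ ℕ) :
    nD D u * nD D v ≤ nD D (u ⊓ v) * nD D (u ⊔ v) := by
  rcases eq_or_ne (nD D u) 0 with h | hu
  · simp [h]
  rcases eq_or_ne (nD D v) 0 with h | hv
  · simp [h]
  obtain ⟨x, hx⟩ := Finset.card_ne_zero.mp hu
  obtain ⟨y, hy⟩ := Finset.card_ne_zero.mp hv
  simp only [mem_filter, mem_Icc] at hx hy
  set e := Nat.gcd x D with hedef
  set f := Nat.gcd y D with hfdef
  have he : e ∣ D := Nat.gcd_dvd_right x D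
  have hf : f ∣ D := Nat.gcd_dvd_right y D
  have he0 : 0 < e := Nat.gcd_pos_of_pos_right x hD
  have hf0 : 0 < f := Nat.gcd_pos_of_pos_right y hD
  have hu' : u = e.factorization := hx.2.symm
  have hv' : v = f.factorization := hy.2.symm
  have hinf : u ⊓ v = (Nat.gcd e f).factorization := by
    rw [hu', hv', Nat.factorization_gcd he0.ne' hf0.ne']
  have hsup : u ⊔ v = (Nat.lcm e f).factorization := by
    rw [hu', hv', Nat.factorization_lcm he0.ne' hf0.ne']
  have hgd : Nat.gcd e f ∣ D := (Nat.gcd_dvd_left e f).trans he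
  have hld : Nat.lcm e f ∣ D := Nat.lcm_dvd he hf
  rw [hinf, hsup, hu', hv', nD_factorization_eq hD he, nD_factorization_eq hD hf,
    nD_factorization_eq hD hgd, nD_factorization_eq hD hld]
  obtain ⟨h1, h2⟩ := gcd_div_eq hD he hf
  have := totient_inf_sup (D / e) (D / f) (Nat.div_pos (Nat.le_of_dvd hD he) he0)
    (Nat.div_pos (Nat.le_of_dvd hD hf) hf0)
  rw [h1, h2] at this
  rw [← this]
  ring_nf
  exact le_refl _

variable {d : ℕ}

def box (D : Fin d → ℕ) : Finset (Fin d → ℕ) := Fintype.piFinset fun j => Icc 1 (D j)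

def phi (D : Fin d → ℕ) (x : Fin d → ℕ) : Fin d → (ℕ →₀ ℕ) :=
  fun j => (Nat.gcd (x j) (D j)).factorization

noncomputable def mu (D : Fin d → ℕ) (a : Fin d → (ℕ →₀ ℕ)) : ℕ :=
  #((box D).filter fun x => phi D x = a)

lemma filter_pi (t : Fin d → Finset ℕ) (p : Fin d → ℕ → Prop) [∀ j, DecidablePred (p j)] :
    (Fintype.piFinset t).filter (fun x => ∀ j, p j (x j)) =
      Fintype.piFinset (fun j => (t j).filter (p j)) := by
  ext x
  simp only [mem_filter, Fintype.mem_piFinset, mem_filter]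
  exact ⟨fun ⟨h1, h2⟩ j => ⟨h1 j, h2 j⟩, fun h => ⟨fun j => (h j).1, fun j => (h j).2⟩⟩

lemma mu_eq_prod (D : Fin d → ℕ) (a : Fin d → (ℕ →₀ ℕ)) :
    mu D a = ∏ j, nD (D j) (a j) := by
  rw [mu, box]
  have : ((Fintype.piFinset fun j => Icc 1 (D j)).filter fun x => phi D x = a) =
      (Fintype.piFinset fun j => Icc 1 (D j)).filter
        (fun x => ∀ j, (Nat.gcd (x j) (D j)).factorization = a j) := by
    apply filter_congr
    intro x _
    simp only [phi, funext_iff]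
  rw [this, filter_pi (fun j => Icc 1 (D j)) (fun j u => (Nat.gcd u (D j)).factorization = a j),
    Fintype.card_piFinset]
  rfl

lemma mu_supermul (D : Fin d → ℕ) (hD : ∀ j, 0 < D j) (a b : Fin d → (ℕ →₀ ℕ)) :
    mu D a * mu D b ≤ mu D (a ⊓ b) * mu D (a ⊔ b) := by
  rw [mu_eq_prod, mu_eq_prod, mu_eq_prod, mu_eq_prod, ← Finset.prod_mul_distrib,
    ← Finset.prod_mul_distrib]
  apply Finset.prod_le_prod'
  intro j _
  have h := nD_supermul (hD j) (a j) (b j)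
  simpa [Pi.inf_apply, Pi.sup_apply] using h

lemma mu_eq_zero_of_not_mem {D : Fin d → ℕ} {a : Fin d → (ℕ →₀ ℕ)}
    (h : a ∉ (box D).image (phi D)) : mu D a = 0 := by
  rw [mu, Finset.card_eq_zero, Finset.filter_eq_empty_iff]
  intro x hx hax
  exact h (hax ▸ Finset.mem_image_of_mem (phi D) hx)

lemma sum_mu (D : Fin d → ℕ) (H : (Fin d → (ℕ →₀ ℕ)) → ℕ) :
    ∑ a ∈ (box D).image (phi D), mu D a * H a = ∑ x ∈ box D, H (phi D x) := by
  rw [← Finset.sum_fiberwise_of_maps_to (fun x hx => mem_image_of_mem (phi D) hx)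
    (fun x => H (phi D x))]
  apply Finset.sum_congr rfl
  intro a _
  have : ∑ x ∈ (box D).filter (fun x => phi D x = a), H (phi D x) =
      ∑ _x ∈ (box D).filter (fun x => phi D x = a), H a := by
    apply Finset.sum_congr rfl
    intro x hx
    rw [(Finset.mem_filter.mp hx).2]
  rw [this, Finset.sum_const, smul_eq_mul, mu]

lemma correlation (D : Fin d → ℕ) (hD : ∀ j, 0 < D j)
    (P Q : (Fin d → (ℕ →₀ ℕ)) → Prop) [DecidablePred P] [DecidablePred Q]
    (hP : ∀ a b, a ≤ b → P a → P b) (hQ : ∀ a b, a ≤ b → Q a → Q b) :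
    #((box D).filter fun x => P (phi D x)) * #((box D).filter fun x => Q (phi D x)) ≤
    #(box D) * #((box D).filter fun x => P (phi D x) ∧ Q (phi D x)) := by
  classical
  set F : (Fin d → (ℕ →₀ ℕ)) → ℕ := fun a => if P a then 1 else 0 with hF
  set G : (Fin d → (ℕ →₀ ℕ)) → ℕ := fun a => if Q a then 1 else 0 with hG
  set S := (box D).image (phi D) with hS
  have key := four_functions_theorem (fun a => mu D a * F a) (fun a => mu D a * G a)
    (mu D) (fun a => mu D a * (F a * G a))
    (fun a => by positivity) (fun a => by positivity) (fun a => by positivity)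
    (fun a => by positivity) ?_ S S
  · have hSinfs : S ⊆ S ⊼ S := fun a ha => Finset.mem_infs.mpr ⟨a, ha, a, ha, inf_idem a⟩
    have hSsups : S ⊆ S ⊻ S := fun a ha => Finset.mem_sups.mpr ⟨a, ha, a, ha, sup_idem a⟩
    have e3 : ∑ a ∈ S ⊼ S, mu D a = ∑ a ∈ S, mu D a := by
      refine (Finset.sum_subset hSinfs ?_).symm
      intro a _ ha
      exact mu_eq_zero_of_not_mem ha
    have e4 : ∑ a ∈ S ⊻ S, mu D a * (F a * G a) = ∑ a ∈ S, mu D a * (F a * G a) := by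
      refine (Finset.sum_subset hSsups ?_).symm
      intro a _ ha
      rw [mu_eq_zero_of_not_mem ha, zero_mul]
    rw [e3, e4] at key
    have t1 : ∑ a ∈ S, mu D a * F a = #((box D).filter fun x => P (phi D x)) := by
      rw [sum_mu D F]
      simp only [hF]
      rw [Finset.sum_boole]
      simp
    have t2 : ∑ a ∈ S, mu D a * G a = #((box D).filter fun x => Q (phi D x)) := by
      rw [sum_mu D G]
      simp only [hG]
      rw [Finset.sum_boole]
      simp
    have t3 : ∑ a ∈ S, mu D a = #(box D) := by
      have : ∑ a ∈ S, mu D a = ∑ a ∈ S, mu D a * (fun _ => 1) a := by simp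
      rw [this, sum_mu D (fun _ => 1)]
      simp
    have t4 : ∑ a ∈ S, mu D a * (F a * G a) =
        #((box D).filter fun x => P (phi D x) ∧ Q (phi D x)) := by
      rw [sum_mu D (fun a => F a * G a)]
      simp only [hF, hG, ite_mul, one_mul, zero_mul]
      rw [Finset.sum_congr rfl (fun x _ => by
        show (if P (phi D x) then if Q (phi D x) then 1 else 0 else 0) =
          if P (phi D x) ∧ Q (phi D x) then 1 else 0
        by_cases h1 : P (phi D x) <;> by_cases h2 : Q (phi D x) <;> simp [h1, h2])]
      rw [Finset.sum_boole]
      simp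
    rw [t1, t2, t3, t4] at key
    exact key
  · intro a b
    rcases eq_or_ne (F a) 0 with h | h
    · rw [h]; simp
    rcases eq_or_ne (G b) 0 with h' | h'
    · rw [h']; simp
    have hPa : P a := by by_contra hc; simp [hF, hc] at h
    have hQb : Q b := by by_contra hc; simp [hG, hc] at h'
    have hFa : F a = 1 := by simp [hF, hPa]
    have hGb : G b = 1 := by simp [hG, hQb]
    have hFG : F (a ⊔ b) * G (a ⊔ b) = 1 := by
      have h1 : P (a ⊔ b) := hP a _ le_sup_left hPa
      have h2 : Q (a ⊔ b) := hQ b _ le_sup_right hQb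
      simp [hF, hG, h1, h2]
    rw [hFa, hGb, hFG, mul_one, mul_one, mul_one]
    exact mu_supermul D hD a b

lemma dvd_iff_phi {D : Fin d → ℕ} (hD : ∀ j, 0 < D j) {x : Fin d → ℕ}
    {m : ℕ} {j : Fin d} (hm : 0 < m) (hmD : m ∣ D j) :
    m ∣ x j ↔ m.factorization ≤ phi D x j := by
  have hg0 : Nat.gcd (x j) (D j) ≠ 0 := (Nat.gcd_pos_of_pos_right _ (hD j)).ne'
  rw [phi, Nat.factorization_le_iff_dvd hm.ne' hg0]
  constructor
  · intro h
    exact Nat.dvd_gcd h hmD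
  · intro h
    exact h.trans (Nat.gcd_dvd_left _ _)

lemma corr' (D : Fin d → ℕ) (hD : ∀ j, 0 < D j) {ι : Type} (c₀ : Fin d → ℕ)
    (hc₀ : ∀ j, 0 < c₀ j) (h0 : ∀ j, c₀ j ∣ D j)
    (s : Finset ι) (c : ι → Fin d → ℕ)
    (hc : ∀ i ∈ s, ∀ j, 0 < c i j) (hdvd : ∀ i ∈ s, ∀ j, c i j ∣ D j) :
    #((box D).filter fun x => ∀ j, c₀ j ∣ x j) *
      #((box D).filter fun x => ∃ i ∈ s, ∀ j, c i j ∣ x j) ≤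
    #(box D) *
      #((box D).filter fun x => (∀ j, c₀ j ∣ x j) ∧ ∃ i ∈ s, ∀ j, c i j ∣ x j) := by
  classical
  have key := correlation D hD
    (fun a => ∀ j, (c₀ j).factorization ≤ a j)
    (fun a => ∃ i ∈ s, ∀ j, (c i j).factorization ≤ a j)
    (fun a b hab h j => (h j).trans (hab j))
    (fun a b hab h => by
      obtain ⟨i, hi, h⟩ := h
      exact ⟨i, hi, fun j => (h j).trans (hab j)⟩)
  have e1 : ((box D).filter fun x => ∀ j, (c₀ j).factorization ≤ phi D x j) =
      ((box D).filter fun x => ∀ j, c₀ j ∣ x j) := by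
    apply filter_congr
    intro x _
    exact forall_congr' fun j => (dvd_iff_phi hD (hc₀ j) (h0 j)).symm
  have e2 : ((box D).filter fun x => ∃ i ∈ s, ∀ j, (c i j).factorization ≤ phi D x j) =
      ((box D).filter fun x => ∃ i ∈ s, ∀ j, c i j ∣ x j) := by
    apply filter_congr
    intro x _
    refine exists_congr fun i => ?_
    refine and_congr_right fun hi => ?_
    exact forall_congr' fun j => (dvd_iff_phi hD (hc i hi j) (hdvd i hi j)).symm
  have e3 : ((box D).filter fun x => (∀ j, (c₀ j).factorization ≤ phi D x j) ∧
        ∃ i ∈ s, ∀ j, (c i j).factorization ≤ phi D x j) =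
      ((box D).filter fun x => (∀ j, c₀ j ∣ x j) ∧ ∃ i ∈ s, ∀ j, c i j ∣ x j) := by
    apply filter_congr
    intro x _
    apply and_congr
    · exact forall_congr' fun j => (dvd_iff_phi hD (hc₀ j) (h0 j)).symm
    · refine exists_congr fun i => ?_
      refine and_congr_right fun hi => ?_
      exact forall_congr' fun j => (dvd_iff_phi hD (hc i hi j) (hdvd i hi j)).symm
  rw [e1, e2, e3] at key
  convert key using 2

lemma card_box (D : Fin d → ℕ) : #(box D) = ∏ j, D j := by
  rw [box, Fintype.card_piFinset]
  apply Finset.prod_congr rfl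
  intro j _
  rw [Nat.card_Icc]
  omega

lemma icc_filter_dvd (D c : ℕ) : #((Icc 1 D).filter fun x => c ∣ x) = D / c := by
  have : Icc 1 D = Ioc 0 D := by
    ext x
    simp only [mem_Icc, mem_Ioc]
    omega
  rw [this, Nat.Ioc_filter_dvd_card_eq_div]

lemma card_dvd_box (D : Fin d → ℕ) (c₀ : Fin d → ℕ) :
    #((box D).filter fun x => ∀ j, c₀ j ∣ x j) = ∏ j, (D j / c₀ j) := by
  rw [box, filter_pi (fun j => Icc 1 (D j)) (fun j u => c₀ j ∣ u), Fintype.card_piFinset]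
  apply Finset.prod_congr rfl
  intro j _
  rw [icc_filter_dvd]

lemma part {γ : Type*} (s : Finset γ) (p q : γ → Prop)
    [DecidablePred p] [DecidablePred q] :
    #(s.filter fun x => p x ∧ q x) + #(s.filter fun x => p x ∧ ¬ q x) = #(s.filter p) := by
  rw [← Finset.filter_filter, ← Finset.filter_filter,
    Finset.card_filter_add_card_filter_not]

lemma arith (T g A gA bad ab N : ℕ) (Ca Dp Ps : ℝ)
    (key : A * bad ≤ T * ab) (h1 : gA + ab = A) (h2 : g + bad = T) (h3 : N + gA = g)
    (hCa : 1 ≤ Ca) (hA : (A : ℝ) * Ca = (T : ℝ)) (hT0 : 0 < T)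
    (hTD : (T : ℝ) = Dp) (hg : Dp * Ps ≤ (g : ℝ)) (hPs : 0 ≤ Ps) :
    Dp * ((1 - 1 / Ca) * Ps) ≤ (N : ℝ) := by
  have hCa0 : (0:ℝ) < Ca := lt_of_lt_of_le one_pos hCa
  have hTR0 : (0:ℝ) < (T:ℝ) := by exact_mod_cast hT0
  have keyR : (A:ℝ) * bad ≤ (T:ℝ) * ab := by exact_mod_cast key
  have h1R : (gA:ℝ) + ab = A := by exact_mod_cast h1
  have h2R : (g:ℝ) + bad = T := by exact_mod_cast h2
  have h3R : (N:ℝ) + gA = g := by exact_mod_cast h3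
  have hR : (T:ℝ) * gA ≤ (A:ℝ) * g := by nlinarith [keyR, h1R, h2R]
  have hgA : (gA:ℝ) * Ca ≤ g := by
    have h' : (T:ℝ) * (gA * Ca) ≤ (T:ℝ) * g := by
      calc (T:ℝ) * (gA * Ca) = ((T:ℝ) * gA) * Ca := by ring
        _ ≤ ((A:ℝ) * g) * Ca := mul_le_mul_of_nonneg_right hR hCa0.le
        _ = (T:ℝ) * g := by rw [← hA]; ring
    exact le_of_mul_le_mul_left h' hTR0
  have hfac0 : (0:ℝ) ≤ 1 - 1 / Ca := by
    rw [sub_nonneg, div_le_one hCa0]; exact hCa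
  have hgA' : (gA:ℝ) ≤ g / Ca := (le_div_iff₀ hCa0).mpr hgA
  calc Dp * ((1 - 1 / Ca) * Ps) = (Dp * Ps) * (1 - 1 / Ca) := by ring
    _ ≤ (g:ℝ) * (1 - 1 / Ca) := mul_le_mul_of_nonneg_right hg hfac0
    _ = (g:ℝ) - g / Ca := by field_simp
    _ ≤ (g:ℝ) - gA := by linarith
    _ = N := by linarith

lemma aux (D : Fin d → ℕ) (hD : ∀ j, 0 < D j) {ι : Type} [DecidableEq ι]
    (c : ι → Fin d → ℕ) (s : Finset ι) :
    (∀ i ∈ s, (∀ j, 0 < c i j) ∧ (∀ j, c i j ∣ D j)) →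
    (∏ j, (D j : ℝ)) * ∏ i ∈ s, (1 - 1 / ∏ j, (c i j : ℝ)) ≤
      #((box D).filter fun x => ∀ i ∈ s, ∃ j, ¬ c i j ∣ x j) := by
  induction s using Finset.induction with
  | empty =>
    intro _
    simp only [Finset.notMem_empty, false_implies, implies_true, Finset.filter_true,
      Finset.prod_empty, mul_one]
    rw [card_box, Nat.cast_prod]
  | @insert a s ha ih =>
    intro hcs
    have hc_a : ∀ j, 0 < c a j := (hcs a (mem_insert_self a s)).1
    have hdvd_a : ∀ j, c a j ∣ D j := (hcs a (mem_insert_self a s)).2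
    have ih' := ih (fun i hi => hcs i (mem_insert_of_mem hi))
    have hc_s : ∀ i ∈ s, ∀ j, 0 < c i j := fun i hi => (hcs i (mem_insert_of_mem hi)).1
    have hdvd_s : ∀ i ∈ s, ∀ j, c i j ∣ D j := fun i hi => (hcs i (mem_insert_of_mem hi)).2
    classical
    have key := corr' D hD (c a) hc_a hdvd_a s c hc_s hdvd_s
    have e1 : ((box D).filter fun x => (∀ j, c a j ∣ x j) ∧ ¬ ∀ i ∈ s, ∃ j, ¬ c i j ∣ x j) =
        ((box D).filter fun x => (∀ j, c a j ∣ x j) ∧ ∃ i ∈ s, ∀ j, c i j ∣ x j) := by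
      apply Finset.filter_congr
      intro x _
      refine and_congr_right fun _ => ?_
      push_neg
      rfl
    have h1 := part (box D) (fun x => ∀ j, c a j ∣ x j)
      (fun x => ∀ i ∈ s, ∃ j, ¬ c i j ∣ x j)
    rw [e1] at h1
    have e2 : ((box D).filter fun x => ¬ ∀ i ∈ s, ∃ j, ¬ c i j ∣ x j) =
        ((box D).filter fun x => ∃ i ∈ s, ∀ j, c i j ∣ x j) := by
      apply Finset.filter_congr
      intro x _
      push_neg
      rfl
    have h2 := Finset.card_filter_add_card_filter_not
      (s := box D) (p := fun x => ∀ i ∈ s, ∃ j, ¬ c i j ∣ x j)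
    rw [e2] at h2
    have e3 : ((box D).filter fun x => (∀ i ∈ s, ∃ j, ¬ c i j ∣ x j) ∧
          ¬ ∀ j, c a j ∣ x j) =
        ((box D).filter fun x => ∀ i ∈ insert a s, ∃ j, ¬ c i j ∣ x j) := by
      apply Finset.filter_congr
      intro x _
      simp only [Finset.forall_mem_insert]
      push_neg
      tauto
    have e4 : ((box D).filter fun x => (∀ i ∈ s, ∃ j, ¬ c i j ∣ x j) ∧
          ∀ j, c a j ∣ x j) =
        ((box D).filter fun x => (∀ j, c a j ∣ x j) ∧ ∀ i ∈ s, ∃ j, ¬ c i j ∣ x j) := by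
      apply Finset.filter_congr
      intro x _
      exact and_comm
    have h3 := part (box D) (fun x => ∀ i ∈ s, ∃ j, ¬ c i j ∣ x j)
      (fun x => ∀ j, c a j ∣ x j)
    rw [e3, e4] at h3
    rw [add_comm] at h3
    have hAeq : #((box D).filter fun x => ∀ j, c a j ∣ x j) * ∏ j, c a j = ∏ j, D j := by
      rw [card_dvd_box, ← Finset.prod_mul_distrib]
      apply Finset.prod_congr rfl
      intro j _
      exact Nat.div_mul_cancel (hdvd_a j)
    have hT0 : 0 < #(box D) := by
      rw [card_box]; exact Finset.prod_pos fun j _ => hD j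
    have hAeq' : #((box D).filter fun x => ∀ j, c a j ∣ x j) * ∏ j, c a j = #(box D) :=
      hAeq.trans (card_box D).symm
    rw [Finset.prod_insert ha]
    refine arith (#(box D)) _ _ _ _ _ _ (∏ j, (c a j : ℝ)) (∏ j, (D j : ℝ))
      (∏ i ∈ s, (1 - 1 / ∏ j, (c i j : ℝ))) key h1 h2 h3 ?_ ?_ hT0 ?_ ih' ?_
    · rw [← Nat.cast_prod]
      exact Nat.one_le_cast.mpr (Finset.prod_pos fun j _ => hc_a j)
    · rw [← Nat.cast_prod, ← Nat.cast_mul, hAeq']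
    · rw [card_box, Nat.cast_prod]
    · apply Finset.prod_nonneg
      intro i hi
      rw [sub_nonneg, div_le_one]
      · rw [← Nat.cast_prod]
        exact Nat.one_le_cast.mpr (Finset.prod_pos fun j _ => hc_s i hi j)
      · rw [← Nat.cast_prod]
        exact_mod_cast Finset.prod_pos fun j _ => hc_s i hi j

end MSieve

open Finset

theorem multidimensional_sieve (d k : ℕ) (hd : 0 < d)
    (c : Fin k → Fin d → ℕ) (D : Fin d → ℕ)
    (hc : ∀ i j, 0 < c i j) (hD : ∀ j, 0 < D j)
    (hprod : ∀ j, D j ∣ ∏ i, c i j)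
    (hdvd : ∀ i j, c i j ∣ D j) :
    ((Fintype.piFinset fun j => Finset.Icc 1 (D j)).filter
        (fun x => ∀ i, ∃ j, ¬ c i j ∣ x j)).card ≥
      (∏ j, (D j : ℝ)) * ∏ i, (1 - 1 / ∏ j, (c i j : ℝ)) := by
  have h := MSieve.aux D hD c Finset.univ (fun i _ => ⟨hc i, hdvd i⟩)
  rw [ge_iff_le]
  refine le_trans h (le_of_eq ?_)
  norm_cast
  apply Finset.card_nbij (fun x => x) <;>
    simp [Set.InjOn, Set.SurjOn, Set.MapsTo, Set.subset_def, MSieve.box]
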